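/- Let n be odd, and suppose X₁, X₂ are real matrices with X₁^T X₁ + X₂^T X₂ = Id_n such that all nonzero eigenvalues of X₁^T X₁ and all nonzero eigenvalues of X₂^T X₂ have even multiplicity. Then a contradiction follows; i.e., no such X₁, X₂ exist. -/
import Mathlib


open Matrix

open Module

lemma map_eigenspace_toEuclideanLin {n : ℕ} (M : Matrix (Fin n) (Fin n) ℝ) (μ : ℝ) :
    Submodule.map ((WithLp.linearEquiv 2 ℝ (Fin n → ℝ)) : _ →ₗ[ℝ] _)
      (Module.End.eigenspace (Matrix.toEuclideanLin M) μ)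
    = Module.End.eigenspace M.mulVecLin μ := by
  ext x
  simp only [Submodule.mem_map, Module.End.mem_eigenspace_iff]
  constructor
  · rintro ⟨y, hy, rfl⟩
    simpa [Matrix.toEuclideanLin_apply, Matrix.mulVecLin_apply] using congrArg (WithLp.equiv 2 _) hy
  · intro hx
    refine ⟨(WithLp.equiv 2 _).symm x, ?_, by simp⟩
    apply (WithLp.equiv 2 (Fin n → ℝ)).injective
    simpa [Matrix.toEuclideanLin_apply, Matrix.mulVecLin_apply] using hx

/-- For n odd, there are no matrices X₁, X₂ with X₁ᵀX₁ + X₂ᵀX₂ = Id_n such that all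
nonzero eigenvalues of X₁ᵀX₁ and of X₂ᵀX₂ have even multiplicity. -/
theorem no_odd_dimensional (m₁ m₂ n : ℕ) (hn : Odd n)
    (X₁ : Matrix (Fin m₁) (Fin n) ℝ) (X₂ : Matrix (Fin m₂) (Fin n) ℝ)
    (h : X₁ᵀ * X₁ + X₂ᵀ * X₂ = 1)
    (h₁ : ∀ μ : ℝ, μ ≠ 0 →
      Even (Module.finrank ℝ (Module.End.eigenspace (X₁ᵀ * X₁).mulVecLin μ)))
    (h₂ : ∀ μ : ℝ, μ ≠ 0 →
      Even (Module.finrank ℝ (Module.End.eigenspace (X₂ᵀ * X₂).mulVecLin μ))) :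
    False := by
  set A := X₁ᵀ * X₁ with hA
  set B := X₂ᵀ * X₂ with hB
  have hAH : A.IsHermitian := by
    have := Matrix.isHermitian_conjTranspose_mul_self X₁
    simpa using this
  set T : Module.End ℝ (EuclideanSpace ℝ (Fin n)) := Matrix.toEuclideanLin A with hT
  set S : Module.End ℝ (EuclideanSpace ℝ (Fin n)) := Matrix.toEuclideanLin B with hS
  have hTsym : T.IsSymmetric := Matrix.isHermitian_iff_isSymmetric.mp hAH
  have hsum : ∀ x : EuclideanSpace ℝ (Fin n), T x + S x = x := by
    intro x
    have : T x + S x = Matrix.toEuclideanLin (A + B) x := by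
      simp [hT, hS]
    rw [this, h]
    apply (WithLp.equiv 2 (Fin n → ℝ)).injective
    simp [Matrix.toEuclideanLin_apply]
  -- eigenspace relation: eigenspace T μ = eigenspace S (1 - μ)
  have heig : ∀ μ : ℝ, Module.End.eigenspace T μ = Module.End.eigenspace S (1 - μ) := by
    intro μ
    ext x
    simp only [Module.End.mem_eigenspace_iff]
    constructor
    · intro hx
      have := hsum x
      rw [hx] at this
      have : S x = x - μ • x := eq_sub_of_add_eq' this
      rw [this, sub_smul, one_smul]
    · intro hx
      have := hsum x
      rw [hx] at this
      have : T x = x - (1 - μ) • x := eq_sub_of_add_eq this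
      rw [this, sub_smul, one_smul]
      abel
  have hInt : DirectSum.IsInternal (fun μ : T.Eigenvalues => Module.End.eigenspace T μ.1) :=
    hTsym.direct_sum_isInternal
  have hrank : n = ∑ μ : T.Eigenvalues, Module.finrank ℝ (Module.End.eigenspace T μ.1) := by
    classical
    have e2 := LinearEquiv.ofBijective (DirectSum.coeLinearMap
      (fun μ : T.Eigenvalues => Module.End.eigenspace T μ.1)) hInt
    have := LinearEquiv.finrank_eq e2
    rw [Module.finrank_directSum, finrank_euclideanSpace] at this
    simpa using this.symm
  have heven : ∀ ν : ℝ, Even (Module.finrank ℝ (Module.End.eigenspace T ν)) := by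
    intro ν
    by_cases hν : ν = 0
    · rw [hν, heig 0, hS]
      rw [← (WithLp.linearEquiv 2 ℝ (Fin n → ℝ)).finrank_map_eq
        (Module.End.eigenspace (Matrix.toEuclideanLin B) (1 - 0)),
        map_eigenspace_toEuclideanLin B (1 - 0)]
      rw [sub_zero]
      exact h₂ 1 one_ne_zero
    · rw [hT, ← (WithLp.linearEquiv 2 ℝ (Fin n → ℝ)).finrank_map_eq
        (Module.End.eigenspace (Matrix.toEuclideanLin A) ν),
        map_eigenspace_toEuclideanLin A ν]
      exact h₁ ν hν
  have : Even n := by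
    rw [hrank]
    exact Finset.even_sum _ (fun μ _ => heven μ.1)
  exact (Nat.not_even_iff_odd.mpr hn) this
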